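/- arXiv:1708.01924 — 5 statements merged into one kernel-verified Lean document; each statement's English description precedes it below -/
import Mathlib

section
/- Every H-category determines an HF-category: defining transport maps Hom(p,q) : Hom(a,b) → Hom(a',b') for p : a =_C a' and q : b =_C b' by Hom(p,q)(f) = τ_{b,b',q} ∘ f ∘ τ_{a',a,p⁻¹}, these maps are functorial (Hom(refl,refl) is the identity map up to Hom-setoid equality, and Hom(p',q') ∘ Hom(p,q) agrees with Hom(tr(p',p), tr(q',q))), respect the Hom-setoid equalities, preserve identities (Hom(p,p)(1_a) = 1_{a'}), and commute with composition. -/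
universe u v w

/-- An E-category: a type of objects, Hom-setoids, identities and composition
satisfying the category laws up to the Hom-setoid equalities. -/
structure ECat (C : Type u) where
  Hom : C → C → Sort v
  eq : ∀ {a b : C}, Hom a b → Hom a b → Prop
  eqv : ∀ a b : C, Equivalence (fun f g : Hom a b => eq f g)
  ide : ∀ a : C, Hom a a
  comp : ∀ {a b c : C}, Hom b c → Hom a b → Hom a c
  comp_congr : ∀ {a b c : C} {g g' : Hom b c} {f f' : Hom a b},
    eq g g' → eq f f' → eq (comp g f) (comp g' f')
  ide_comp : ∀ {a b : C} (f : Hom a b), eq (comp (ide b) f) f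
  comp_ide : ∀ {a b : C} (f : Hom a b), eq (comp f (ide a)) f
  assoc : ∀ {a b c d : C} (h : Hom c d) (g : Hom b c) (f : Hom a b),
    eq (comp h (comp g f)) (comp (comp h g) f)

/-- An H-structure on an E-category: an equivalence relation on objects together
with transport morphisms τ satisfying (H1)-(H3). -/
structure HStruct {C : Type u} (E : ECat C) where
  R : C → C → Prop
  requiv : Equivalence R
  tau : ∀ {a b : C}, R a b → E.Hom a b
  H1 : ∀ {a : C} (p : R a a), E.eq (tau p) (E.ide a)
  H2 : ∀ {a b : C} (p q : R a b), E.eq (tau p) (tau q)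
  H3 : ∀ {a b c : C} (p : R a b) (q : R b c) (r : R a c),
    E.eq (E.comp (tau q) (tau p)) (tau r)

/-- The transport map `Hom(p,q)(f) = τ_{b,b',q} ∘ f ∘ τ_{a',a,p⁻¹}` of an
H-category. -/
def htr {C : Type u} (E : ECat.{u, v} C) (H : HStruct E) {a a' b b' : C}
    (p : H.R a a') (q : H.R b b') (f : E.Hom a b) : E.Hom a' b' :=
  E.comp (H.tau q) (E.comp f (H.tau (H.requiv.symm p)))


section Aux
variable {C : Type u} (E : ECat.{u, v} C) (H : HStruct E)

lemma ecat_trans {a b : C} {f g h : E.Hom a b} (h1 : E.eq f g) (h2 : E.eq g h) :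
    E.eq f h := (E.eqv a b).trans h1 h2

lemma ecat_refl {a b : C} (f : E.Hom a b) : E.eq f f := (E.eqv a b).refl f

lemma ecat_symm {a b : C} {f g : E.Hom a b} (h1 : E.eq f g) : E.eq g f :=
  (E.eqv a b).symm h1

lemma tau_inv_comp {a b : C} (p : H.R a b) :
    E.eq (E.comp (H.tau (H.requiv.symm p)) (H.tau p)) (E.ide a) :=
  ecat_trans E (H.H3 p (H.requiv.symm p) (H.requiv.refl a)) (H.H1 _)

lemma comp_tau_inv {a b : C} (p : H.R a b) :
    E.eq (E.comp (H.tau p) (H.tau (H.requiv.symm p))) (E.ide b) :=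
  ecat_trans E (H.H3 (H.requiv.symm p) p (H.requiv.refl b)) (H.H1 _)

end Aux

/-- Every H-category determines an HF-category: the transport maps `Hom(p,q)`
respect the Hom-setoid equalities, are functorial (identity proofs give the
identity map, and transports compose), preserve identities and commute with
composition. -/
theorem hcat_gives_hfcat {C : Type u} (E : ECat.{u, v} C) (H : HStruct E) :
    (∀ {a a' b b' : C} (p : H.R a a') (q : H.R b b') {f f' : E.Hom a b},
      E.eq f f' → E.eq (htr E H p q f) (htr E H p q f')) ∧
    (∀ {a b : C} (f : E.Hom a b),
      E.eq (htr E H (H.requiv.refl a) (H.requiv.refl b) f) f) ∧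
    (∀ {a a' a'' b b' b'' : C} (p : H.R a a') (p' : H.R a' a'')
      (q : H.R b b') (q' : H.R b' b'') (f : E.Hom a b),
      E.eq (htr E H p' q' (htr E H p q f))
        (htr E H (H.requiv.trans p p') (H.requiv.trans q q') f)) ∧
    (∀ {a a' : C} (p : H.R a a'), E.eq (htr E H p p (E.ide a)) (E.ide a')) ∧
    (∀ {a a' b b' c c' : C} (p : H.R a a') (q : H.R b b') (r : H.R c c')
      (f : E.Hom a b) (g : E.Hom b c),
      E.eq (htr E H p r (E.comp g f))
        (E.comp (htr E H q r g) (htr E H p q f))) := by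
  have tr := @ecat_trans _ E
  have sy := @ecat_symm _ E
  have rf := @ecat_refl _ E
  refine ⟨?_, ?_, ?_, ?_, ?_⟩
  · intro a a' b b' p q f f' hf
    exact E.comp_congr (rf _) (E.comp_congr hf (rf _))
  · intro a b f
    refine tr (E.comp_congr (H.H1 _) (E.comp_congr (rf f) (H.H1 _))) ?_
    exact tr (E.ide_comp _) (E.comp_ide f)
  · intro a a' a'' b b' b'' p p' q q' f
    unfold htr
    refine tr (E.assoc _ _ _) ?_
    refine tr (E.comp_congr (E.assoc _ _ _) (rf _)) ?_
    refine tr (E.comp_congr (E.comp_congr (H.H3 q q' (H.requiv.trans q q')) (rf _)) (rf _)) ?_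
    refine tr (sy (E.assoc _ _ _)) ?_
    refine E.comp_congr (rf _) ?_
    refine tr (sy (E.assoc _ _ _)) ?_
    exact E.comp_congr (rf f) (H.H3 _ _ _)
  · intro a a' p
    unfold htr
    refine tr (E.comp_congr (rf _) (E.ide_comp _)) ?_
    exact comp_tau_inv E H p
  · intro a a' b b' c c' p q r f g
    refine sy ?_
    unfold htr
    refine tr (sy (E.assoc _ _ _)) ?_
    refine E.comp_congr (rf _) ?_
    refine tr (sy (E.assoc _ _ _)) ?_
    refine tr (E.comp_congr (rf g) (E.assoc _ _ _)) ?_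
    refine tr (E.comp_congr (rf g) (E.comp_congr (tau_inv_comp E H q) (rf _))) ?_
    refine tr (E.comp_congr (rf g) (E.ide_comp _)) ?_
    exact E.assoc g f _
end

section
/- Specifying an H-structure on an E-category C with object type C₀ is equivalent to giving an equivalence relation =_C on C₀ together with an E-functor from the E-category (C₀, =_C)^# to C that is the identity on objects, where (C₀, =_C)^# has objects C₀ and Hom(a,b) the setoid of proofs of a =_C b with the total (always-true) equivalence relation. -/
universe u v w

universe v'

/-- An E-functor between E-categories: an object map and extensional maps on
Hom-setoids preserving identities and composition up to the Hom-setoid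
equality. -/
structure EFunctor {C : Type u} {D : Type w} (E : ECat.{u, v} C)
    (F : ECat.{w, v'} D) where
  obj : C → D
  map : ∀ {a b : C}, E.Hom a b → F.Hom (obj a) (obj b)
  map_congr : ∀ {a b : C} {f g : E.Hom a b}, E.eq f g → F.eq (map f) (map g)
  map_ide : ∀ a : C, F.eq (map (E.ide a)) (F.ide (obj a))
  map_comp : ∀ {a b c : C} (g : E.Hom b c) (f : E.Hom a b),
    F.eq (map (E.comp g f)) (F.comp (map g) (map f))

/-- The E-category `(C₀, =_C)^#`: objects `C₀`, `Hom(a,b)` the proofs of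
`a =_C b` with the total equivalence relation. -/
def sharp {C₀ : Type u} (R : C₀ → C₀ → Prop) (hR : Equivalence R) :
    ECat.{u, 0} C₀ where
  Hom a b := R a b
  eq _ _ := True
  eqv _ _ := ⟨fun _ => trivial, fun _ => trivial, fun _ _ => trivial⟩
  ide a := hR.refl a
  comp q p := hR.trans p q
  comp_congr _ _ := trivial
  ide_comp _ := trivial
  comp_ide _ := trivial
  assoc _ _ _ := trivial

/-- Specifying an H-structure on an E-category with a given equivalence
relation on objects is the same as giving an E-functor from `(C₀, =_C)^#`
which is the identity on objects. -/
theorem hstruct_iff_sharp_functor {C₀ : Type u} (E : ECat.{u, v} C₀)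
    (R : C₀ → C₀ → Prop) (hR : Equivalence R) :
    (∃ tau : ∀ a b : C₀, R a b → E.Hom a b,
      (∀ (a : C₀) (p : R a a), E.eq (tau a a p) (E.ide a)) ∧
      (∀ (a b : C₀) (p q : R a b), E.eq (tau a b p) (tau a b q)) ∧
      (∀ (a b c : C₀) (p : R a b) (q : R b c) (r : R a c),
        E.eq (E.comp (tau b c q) (tau a b p)) (tau a c r))) ↔
    (∃ F : EFunctor (sharp R hR) E, ∀ a : C₀, F.obj a = a) := by
  constructor
  · rintro ⟨tau, h1, h2, h3⟩
    refine ⟨⟨id, fun {a b} p => tau a b p, ?_, ?_, ?_⟩, fun _ => rfl⟩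
    · intro a b f g _; exact h2 a b f g
    · intro a; exact h1 a (hR.refl a)
    · intro a b c g f
      exact (E.eqv a c).symm (h3 a b c f g (hR.trans f g))
  · rintro ⟨⟨obj, map, mc, mi, mcp⟩, h⟩
    have hobj : obj = id := funext h
    subst hobj
    refine ⟨fun a b p => map p, ?_, ?_, ?_⟩
    · intro a p; exact mi a
    · intro a b p q; exact mc trivial
    · intro a b c p q r
      exact (E.eqv a c).symm (mcp q p)
end

section
/- Assume the Zermelo axiom of choice for setoids (ZAC). Then for any setoid A there is an extensional function s : A → Ā (where Ā is the carrier of A equipped with its identity type as equality) such that x =_A s(x) for all x : A, and x =_A u implies Id(s(x), s(u)); i.e., s selects a canonical representative from each equivalence class. -/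
universe u

/-- (Using ZAC) For any setoid `A` there is an extensional function
`s : A → Ā` (where `Ā` carries the identity type as equality) such that
`x =_A s(x)` for all `x`, and `x =_A u` implies `Id(s(x), s(u))`: `s` selects
a canonical representative of each equivalence class. -/
theorem zac_selection
    (ZAC : ∀ (α β : Type u) (SA : Setoid α) (SB : Setoid β)
      (R : α → β → Prop),
      (∀ x x' y y', SA.r x x' → SB.r y y' → (R x y ↔ R x' y')) →
      (∀ x, ∃ y, R x y) →
      ∃ f : α → β, (∀ x x', SA.r x x' → SB.r (f x) (f x')) ∧ ∀ x, R x (f x))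
    (α : Type u) (SA : Setoid α) :
    ∃ s : α → α, (∀ x u, SA.r x u → s x = s u) ∧ (∀ x, SA.r x (s x)) := by
  obtain ⟨f, hf, hR⟩ := ZAC α α SA ⟨Eq, eq_equivalence⟩ SA.r
    (fun x x' y y' hx hy => by
      cases hy
      exact ⟨fun h => SA.trans (SA.symm hx) h, fun h => SA.trans hx h⟩)
    (fun x => ⟨x, SA.refl x⟩)
  exact ⟨f, hf, hR⟩
end

section
/- Assume classical choice (ZAC) and UIP. If C is an E-category and =_C is an equivalence relation on its objects such that a =_C b implies a and b are isomorphic in C, then there exists a family τ making (=_C, τ) an H-structure on C. -/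
universe u v w

/-- Objects `a`, `b` of an E-category are isomorphic. -/
def EIso {C : Type u} (E : ECat.{u, v} C) (a b : C) : Prop :=
  ∃ (f : E.Hom a b) (g : E.Hom b a),
    E.eq (E.comp g f) (E.ide a) ∧ E.eq (E.comp f g) (E.ide b)


theorem hstruct_aux {C : Type u} (E : ECat.{u, v} C) {a b c x y z : C}
    (fa : E.Hom a x) (fb : E.Hom b y) (gb : E.Hom y b) (gc : E.Hom z c)
    (hfb : E.eq (E.comp fb gb) (E.ide y))
    (h1 : x = y) (h2 : y = z) (h3 : x = z) :
    E.eq (E.comp (E.comp gc (h2 ▸ fb)) (E.comp gb (h1 ▸ fa)))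
      (E.comp gc (h3 ▸ fa)) := by
  subst h1; subst h2
  have T := E.eqv a c
  refine T.trans ((E.eqv a c).symm (E.assoc gc fb (E.comp gb fa))) ?_
  refine T.trans (E.comp_congr ((E.eqv x c).refl gc) (E.assoc fb gb fa)) ?_
  refine T.trans (E.comp_congr ((E.eqv x c).refl gc)
    (E.comp_congr hfb ((E.eqv a x).refl fa))) ?_
  exact E.comp_congr ((E.eqv x c).refl gc) (E.ide_comp fa)

/-- (ZAC, UIP) If `=_C` is an equivalence relation on the objects of an
E-category refining the isomorphism relation, then there is a family τ making
`(=_C, τ)` an H-structure. -/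
theorem zac_uip_extend_to_hstruct
    (ZAC : ∀ (α β : Type u) (SA : Setoid α) (SB : Setoid β)
      (Rel : α → β → Prop),
      (∀ x x' y y', SA.r x x' → SB.r y y' → (Rel x y ↔ Rel x' y')) →
      (∀ x, ∃ y, Rel x y) →
      ∃ f : α → β, (∀ x x', SA.r x x' → SB.r (f x) (f x')) ∧ ∀ x, Rel x (f x))
    (UIP : ∀ (A : Type u) (a b : A) (p q : a = b), p = q)
    {C : Type u} (E : ECat.{u, v} C) (R : C → C → Prop) (hR : Equivalence R)
    (hiso : ∀ a b : C, R a b → EIso E a b) :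
    ∃ tau : ∀ a b : C, R a b → E.Hom a b,
      (∀ (a : C) (p : R a a), E.eq (tau a a p) (E.ide a)) ∧
      (∀ (a b : C) (p q : R a b), E.eq (tau a b p) (tau a b q)) ∧
      (∀ (a b c : C) (p : R a b) (q : R b c) (r : R a c),
        E.eq (E.comp (tau b c q) (tau a b p)) (tau a c r)) := by
  classical
  obtain ⟨s, hs, hRs⟩ := ZAC C C ⟨R, hR⟩ ⟨Eq, eq_equivalence⟩ R
    (fun x x' y y' hx hy => by
      subst hy
      exact ⟨fun h => hR.trans (hR.symm hx) h, fun h => hR.trans hx h⟩)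
    (fun x => ⟨x, hR.refl x⟩)
  choose f g hgf hfg using fun a => hiso a (s a) (hRs a)
  refine ⟨fun a b p => E.comp (g b) ((hs a b p) ▸ f a), ?_, ?_, ?_⟩
  · intro a p
    exact hgf a
  · intro a b p q
    exact (E.eqv a b).refl _
  · intro a b c p q r
    exact hstruct_aux E (f a) (f b) (g b) (g c) (hfg b)
      (hs a b p) (hs b c q) (hs a c r)
end

section
/- Given an HF-category C, the induced family τ_{a,b,p} := Hom(refl(a), p)(1_a) for p : a =_C b defines an H-structure on the underlying E-category: it satisfies (H1) τ_{a,a,p} = 1_a, (H2) τ_{a,b,p} = τ_{a,b,q}, and (H3) τ_{b,c,q} ∘ τ_{a,b,p} = τ_{a,c,r}. -/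
universe u v

/-- An HF-category: a setoid of objects, a proof-irrelevant family of
Hom-setoids indexed by pairs of objects (i.e. coherent transport maps along
proofs of object equality), with identities and associative unital composition
compatible with transport. -/
structure HFCat (C : Type u) where
  R : C → C → Prop
  requiv : Equivalence R
  Hom : C → C → Sort v
  eq : ∀ {a b : C}, Hom a b → Hom a b → Prop
  eqv : ∀ a b : C, Equivalence (fun f g : Hom a b => eq f g)
  ide : ∀ a : C, Hom a a
  comp : ∀ {a b c : C}, Hom b c → Hom a b → Hom a c
  comp_congr : ∀ {a b c : C} {g g' : Hom b c} {f f' : Hom a b},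
    eq g g' → eq f f' → eq (comp g f) (comp g' f')
  ide_comp : ∀ {a b : C} (f : Hom a b), eq (comp (ide b) f) f
  comp_ide : ∀ {a b : C} (f : Hom a b), eq (comp f (ide a)) f
  assoc : ∀ {a b c d : C} (h : Hom c d) (g : Hom b c) (f : Hom a b),
    eq (comp h (comp g f)) (comp (comp h g) f)
  /-- Transport along proofs of object equality. -/
  tr : ∀ {a a' b b' : C}, R a a' → R b b' → Hom a b → Hom a' b'
  tr_congr : ∀ {a a' b b' : C} (p : R a a') (q : R b b') {f f' : Hom a b},
    eq f f' → eq (tr p q f) (tr p q f')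
  tr_irrel : ∀ {a a' b b' : C} (p p' : R a a') (q q' : R b b') (f : Hom a b),
    eq (tr p q f) (tr p' q' f)
  tr_refl : ∀ {a b : C} (f : Hom a b),
    eq (tr (requiv.refl a) (requiv.refl b) f) f
  tr_trans : ∀ {a a' a'' b b' b'' : C} (p : R a a') (p' : R a' a'')
    (q : R b b') (q' : R b' b'') (f : Hom a b),
    eq (tr p' q' (tr p q f)) (tr (requiv.trans p p') (requiv.trans q q') f)
  tr_ide : ∀ {a a' : C} (p : R a a'), eq (tr p p (ide a)) (ide a')
  tr_comp : ∀ {a a' b b' c c' : C} (p : R a a') (q : R b b') (r : R c c')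
    (g : Hom b c) (f : Hom a b),
    eq (tr p r (comp g f)) (comp (tr q r g) (tr p q f))

/-- The H-structure transport induced by an HF-category:
`τ_{a,b,p} = Hom(refl a, p)(1_a)`. -/
def HFCat.tau {C : Type u} (F : HFCat.{u, v} C) {a b : C} (p : F.R a b) :
    F.Hom a b :=
  F.tr (F.requiv.refl a) p (F.ide a)

/-- Given an HF-category, the family `τ_{a,b,p} := Hom(refl a, p)(1_a)`
defines an H-structure on the underlying E-category: it satisfies (H1), (H2)
and (H3). -/
theorem hfcat_gives_hstruct {C : Type u} (F : HFCat.{u, v} C) :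
    (∀ {a : C} (p : F.R a a), F.eq (F.tau p) (F.ide a)) ∧
    (∀ {a b : C} (p q : F.R a b), F.eq (F.tau p) (F.tau q)) ∧
    (∀ {a b c : C} (p : F.R a b) (q : F.R b c) (r : F.R a c),
      F.eq (F.comp (F.tau q) (F.tau p)) (F.tau r)) := by
  refine ⟨fun {a} p => ?_, fun {a b} p q => F.tr_irrel _ _ _ _ _, fun {a b c} p q r => ?_⟩
  · exact (F.eqv a a).trans (F.tr_irrel _ p _ p _) (F.tr_ide p)
  · -- τ q = tr p r (1_a)
    have h1 : F.eq (F.tau q) (F.tr p r (F.ide a)) := by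
      refine (F.eqv b c).trans
        (F.tr_congr _ q ((F.eqv b b).symm (F.tr_ide p))) ?_
      exact (F.eqv b c).trans (F.tr_trans p (F.requiv.refl b) p q (F.ide a))
        (F.tr_irrel _ p _ r _)
    refine (F.eqv a c).trans (F.comp_congr h1 ((F.eqv a b).refl _)) ?_
    refine (F.eqv a c).trans
      ((F.eqv a c).symm (F.tr_comp (F.requiv.refl a) p r (F.ide a) (F.ide a))) ?_
    exact F.tr_congr _ r (F.ide_comp (F.ide a))
end
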